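/- arXiv:1405.3882 — 3 statements merged into one kernel-verified Lean document; each statement's English description precedes it below -/
import Mathlib

section
/- The measure γ_θ is invariant under T_θ: for every Borel set A ⊆ [0,θ], γ_θ(T_θ⁻¹(A)) = γ_θ(A). -/
open MeasureTheory Real Set

/-- θ = 1/√m. -/
noncomputable def theta (m : ℕ) : ℝ := 1 / Real.sqrt m

/-- The θ-expansion transformation T_θ(x) = 1/x − θ·⌊1/(xθ)⌋ for x ≠ 0, T_θ(0) = 0. -/
noncomputable def Tmap (m : ℕ) (x : ℝ) : ℝ :=
  if x = 0 then 0 else 1 / x - theta m * (⌊1 / (x * theta m)⌋ : ℝ)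

/-- The invariant measure γ_θ(A) = (1/log(1+θ²)) ∫_A θ/(1+θx) dx on [0,θ]. -/
noncomputable def gammaMeasure (m : ℕ) : Measure ℝ :=
  (ENNReal.ofReal (1 / Real.log (1 + theta m ^ 2))) •
    ((volume.restrict (Icc 0 (theta m))).withDensity
      fun x => ENNReal.ofReal (theta m / (1 + theta m * x)))

lemma theta_pos {m : ℕ} (hm : 1 ≤ m) : 0 < theta m := by
  have h : (0:ℝ) < m := by exact_mod_cast hm
  exact div_pos one_pos (Real.sqrt_pos.mpr h)

lemma m_theta {m : ℕ} (hm : 1 ≤ m) : (m : ℝ) * theta m * theta m = 1 := by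
  have h : (0:ℝ) < m := by exact_mod_cast hm
  have hs : Real.sqrt m ≠ 0 := (Real.sqrt_pos.mpr h).ne'
  have hmm : Real.sqrt m * Real.sqrt m = m := Real.mul_self_sqrt h.le
  field_simp [theta]
  rw [theta, div_pow, one_pow, Real.sq_sqrt h.le, mul_one_div_cancel h.ne']


lemma Tmap_eq_fract {m : ℕ} (hm : 1 ≤ m) {x : ℝ} (hx : x ≠ 0) :
    Tmap m x = theta m * Int.fract (1 / (x * theta m)) := by
  have hθ := theta_pos hm
  have h : theta m * (1 / (x * theta m)) = 1 / x := by
    field_simp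
  rw [Tmap, if_neg hx, Int.fract, mul_sub, h]

lemma measurable_Tmap (m : ℕ) : Measurable (Tmap m) := by
  unfold Tmap
  have h1 : Measurable fun x : ℝ => 1 / x := by simpa [one_div] using measurable_inv
  have h2 : Measurable fun x : ℝ => (⌊1 / (x * theta m)⌋ : ℝ) :=
    measurable_from_top.comp (h1.comp (measurable_id.mul_const _)).floor
  exact Measurable.ite (MeasurableSet.singleton 0) measurable_const
    (h1.sub (h2.const_mul _))

lemma lint_Icc {m : ℕ} (hm : 1 ≤ m) {p q : ℝ} (hp : 0 ≤ p) (hpq : p ≤ q) :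
    ∫⁻ x in Icc p q, ENNReal.ofReal (theta m / (1 + theta m * x)) =
      ENNReal.ofReal (Real.log (1 + theta m * q) - Real.log (1 + theta m * p)) := by
  have hθ := theta_pos hm
  set θ := theta m with hθdef
  have hpos : ∀ x ∈ Icc p q, 0 < 1 + θ * x := fun x hx => by nlinarith [hx.1]
  have hcont : ContinuousOn (fun x => θ / (1 + θ * x)) (Icc p q) :=
    ContinuousOn.div continuousOn_const (by fun_prop) fun x hx => (hpos x hx).ne'
  have hint : IntervalIntegrable (fun x => θ / (1 + θ * x)) volume p q := by
    apply ContinuousOn.intervalIntegrable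
    rwa [uIcc_of_le hpq]
  have hderiv : ∀ x ∈ uIcc p q, HasDerivAt (fun x => Real.log (1 + θ * x)) (θ / (1 + θ * x)) x := by
    intro x hx
    rw [uIcc_of_le hpq] at hx
    have h0 := hpos x hx
    have h1 : HasDerivAt (fun x : ℝ => 1 + θ * x) θ x := by
      simpa using ((hasDerivAt_id x).const_mul θ).const_add 1
    have h2 := (Real.hasDerivAt_log h0.ne').comp x h1
    have e : θ / (1 + θ * x) = (1 + θ * x)⁻¹ * θ := by ring
    rw [e]
    exact h2
  have heq : ∫ x in p..q, θ / (1 + θ * x) = Real.log (1 + θ * q) - Real.log (1 + θ * p) :=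
    intervalIntegral.integral_eq_sub_of_hasDerivAt hderiv hint
  have hIoc : (volume : Measure ℝ).restrict (Icc p q) = volume.restrict (Ioc p q) :=
    (Measure.restrict_congr_set Ioc_ae_eq_Icc).symm
  rw [hIoc, ← heq, intervalIntegral.integral_of_le hpq,
    ofReal_integral_eq_lintegral_ofReal
      ((hcont.integrableOn_Icc).mono_set Ioc_subset_Icc_self)
      ((ae_restrict_iff' measurableSet_Ioc).2 (Filter.Eventually.of_forall
        fun x hx => div_nonneg hθ.le (hpos x (Ioc_subset_Icc_self hx)).le))]

lemma gamma_apply (m : ℕ) {B : Set ℝ} (hB : MeasurableSet B) :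
    gammaMeasure m B = ENNReal.ofReal (1 / Real.log (1 + theta m ^ 2)) *
      ∫⁻ x in B ∩ Icc 0 (theta m), ENNReal.ofReal (theta m / (1 + theta m * x)) := by
  rw [gammaMeasure, Measure.smul_apply, smul_eq_mul, withDensity_apply _ hB,
    Measure.restrict_restrict hB]

lemma gamma_fin (m : ℕ) (hm : 1 ≤ m) : IsFiniteMeasure (gammaMeasure m) := by
  constructor
  rw [gamma_apply m MeasurableSet.univ, univ_inter, lint_Icc hm le_rfl (theta_pos hm).le]
  exact ENNReal.mul_lt_top ENNReal.ofReal_lt_top ENNReal.ofReal_lt_top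

lemma Tmap_nonneg {m : ℕ} (hm : 1 ≤ m) (x : ℝ) : 0 ≤ Tmap m x := by
  rcases eq_or_ne x 0 with rfl | h
  · simp [Tmap]
  · rw [Tmap_eq_fract hm h]
    exact mul_nonneg (theta_pos hm).le (Int.fract_nonneg _)

lemma Tmap_le {m : ℕ} (hm : 1 ≤ m) (x : ℝ) : Tmap m x ≤ theta m := by
  rcases eq_or_ne x 0 with rfl | h
  · simp [Tmap, (theta_pos hm).le]
  · rw [Tmap_eq_fract hm h]
    nlinarith [Int.fract_lt_one (1 / (x * theta m)), theta_pos (m := m) hm]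

lemma nu_inter {ν : Measure ℝ} {s : Set ℝ} (hν : ν sᶜ = 0) (B : Set ℝ) :
    ν B = ν (B ∩ s) := by
  apply le_antisymm
  · calc ν B ≤ ν ((B ∩ s) ∪ sᶜ) := measure_mono (fun x hx => by
        by_cases hxs : x ∈ s
        · exact Or.inl ⟨hx, hxs⟩
        · exact Or.inr hxs)
    _ ≤ ν (B ∩ s) + ν sᶜ := measure_union_le _ _
    _ = ν (B ∩ s) := by rw [hν, add_zero]
  · exact measure_mono inter_subset_left
set_option maxHeartbeats 1000000 in
lemma key_Iic (m : ℕ) (hm : 1 ≤ m) (a : ℝ) :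
    gammaMeasure m (Tmap m ⁻¹' Iic a) = gammaMeasure m (Iic a) := by
  have hθ := theta_pos hm
  have hmθ := m_theta hm
  set θ := theta m with hθdef
  set dens : ℝ → ENNReal := fun x => ENNReal.ofReal (θ / (1 + θ * x)) with hdens
  set ν : Measure ℝ := (volume.restrict (Icc 0 θ)).withDensity dens with hν
  have hT := measurable_Tmap m
  have hS : MeasurableSet (Tmap m ⁻¹' Iic a) := hT measurableSet_Iic
  have hνapp : ∀ B : Set ℝ, MeasurableSet B → ν B = ∫⁻ x in B ∩ Icc 0 θ, dens x := by
    intro B hB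
    rw [hν, withDensity_apply _ hB, Measure.restrict_restrict hB]
  have hνc : ν (Icc 0 θ)ᶜ = 0 := by
    apply withDensity_absolutelyContinuous _ _
    rw [Measure.restrict_apply (measurableSet_Icc).compl]
    simp
  rw [gammaMeasure, Measure.smul_apply, Measure.smul_apply, smul_eq_mul, smul_eq_mul]
  rw [← hθdef, ← hdens, ← hν]
  congr 1
  rw [nu_inter hνc (Tmap m ⁻¹' Iic a), nu_inter hνc (Iic a)]
  rcases lt_or_ge a 0 with ha | ha
  · have h1 : Tmap m ⁻¹' Iic a ∩ Icc 0 θ = ∅ := by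
      ext x
      simp only [mem_inter_iff, mem_preimage, mem_Iic, mem_Icc, mem_empty_iff_false, iff_false,
        not_and]
      intro hTx
      exact absurd (le_trans (Tmap_nonneg hm x) hTx) (not_le.mpr ha)
    have h2 : Iic a ∩ Icc 0 θ = ∅ := by
      ext x
      simp only [mem_inter_iff, mem_Iic, mem_Icc, mem_empty_iff_false, iff_false, not_and]
      intro hx hx2 hx3
      linarith
    rw [h1, h2]
  rcases lt_or_ge a θ with haθ | haθ
  swap
  · have h1 : Tmap m ⁻¹' Iic a ∩ Icc 0 θ = Icc 0 θ := by
      ext x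
      simp only [mem_inter_iff, mem_preimage, mem_Iic, mem_Icc]
      exact ⟨fun h => h.2, fun h => ⟨le_trans (Tmap_le hm x) haθ, h⟩⟩
    have h2 : Iic a ∩ Icc 0 θ = Icc 0 θ := by
      ext x
      simp only [mem_inter_iff, mem_Iic, mem_Icc]
      exact ⟨fun h => h.2, fun h => ⟨le_trans h.2 haθ, h⟩⟩
    rw [h1, h2]
  -- main case : 0 ≤ a < θ
  set c : ℕ → ℝ := fun n => ((n : ℝ) + m) * θ with hc
  have hm1 : (1:ℝ) ≤ m := by exact_mod_cast hm
  have hmθ' : (m : ℝ) * θ = 1 / θ := by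
    rw [eq_div_iff hθ.ne']; exact hmθ
  have hcpos : ∀ n, 0 < c n := by
    intro n
    have h0 : (0:ℝ) ≤ n := Nat.cast_nonneg n
    have : (0:ℝ) < (n : ℝ) + m := by linarith
    exact mul_pos this hθ
  have hc_ge : ∀ n, 1 / θ ≤ c n := by
    intro n
    have h0 : (0:ℝ) ≤ n := Nat.cast_nonneg n
    calc 1 / θ = (m : ℝ) * θ := hmθ'.symm
    _ ≤ ((n : ℝ) + m) * θ := by nlinarith
  have hapos : ∀ n, 0 < a + c n := fun n => by linarith [hcpos n]
  have hppos : ∀ n, 0 < 1 / (a + c n) := fun n => by positivity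
  have hpq : ∀ n, 1 / (a + c n) ≤ 1 / (c n) := fun n =>
    one_div_le_one_div_of_le (hcpos n) (by linarith)
  have hqθ : ∀ n, 1 / (c n) ≤ θ := by
    intro n
    have h1 : 1 / (c n) ≤ 1 / (1 / θ) := one_div_le_one_div_of_le (by positivity) (hc_ge n)
    rwa [one_div_one_div] at h1
  have hcsucc : ∀ n, c (n + 1) = c n + θ := by
    intro n
    simp only [hc]
    push_cast
    ring
  have hIsub : ∀ n, Icc (1 / (a + c n)) (1 / (c n)) ⊆ Icc 0 θ := fun n =>
    Icc_subset_Icc (hppos n).le (hqθ n)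
  -- the set identity
  have hset : Tmap m ⁻¹' Iic a ∩ Icc 0 θ =
      {0} ∪ ⋃ n : ℕ, Icc (1 / (a + c n)) (1 / (c n)) := by
    ext x
    simp only [mem_inter_iff, mem_preimage, mem_Iic, mem_Icc, mem_union, mem_singleton_iff,
      mem_iUnion]
    constructor
    · rintro ⟨hTx, hx0, hxθ⟩
      rcases eq_or_lt_of_le hx0 with h | h
      · exact Or.inl h.symm
      right
      have hxθpos : 0 < x * θ := mul_pos h hθ
      have hy : (m : ℝ) ≤ 1 / (x * θ) := by
        rw [le_div_iff₀ hxθpos]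
        nlinarith
      set k : ℤ := ⌊1 / (x * θ)⌋ with hk
      have hkm : (m : ℤ) ≤ k := by
        rw [hk, Int.le_floor]
        exact_mod_cast hy
      have hkR : (1:ℝ) ≤ (k : ℝ) := by
        have : (1:ℤ) ≤ k := le_trans (by exact_mod_cast hm) hkm
        exact_mod_cast this
      refine ⟨(k - m).toNat, ?_, ?_⟩
      all_goals
        have hkc : (((k - (m:ℤ)).toNat : ℝ) + m) = (k : ℝ) := by
          have h1 : ((k - (m:ℤ)).toNat : ℤ) = k - m := Int.toNat_of_nonneg (by omega)
          have h2 : ((k - (m:ℤ)).toNat : ℝ) = ((k : ℝ) - m) := by exact_mod_cast h1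
          rw [h2]; ring
        have hcn : c (k - (m:ℤ)).toNat = (k : ℝ) * θ := by
          simp only [hc]; rw [hkc]
      · -- lower bound
        have hTx' : 1 / x - θ * (k : ℝ) ≤ a := by
          rw [Tmap, if_neg h.ne', ← hθdef] at hTx
          exact hTx
        have h1x : 1 / x ≤ a + (k : ℝ) * θ := by linarith
        have h2 : 1 ≤ x * (a + (k : ℝ) * θ) := by
          have := (div_le_iff₀ h).mp h1x
          nlinarith
        rw [hcn, div_le_iff₀ (by nlinarith : (0:ℝ) < a + (k:ℝ) * θ)]
        nlinarith
      · -- upper bound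
        have hfl : (k : ℝ) ≤ 1 / (x * θ) := by rw [hk]; exact Int.floor_le _
        have h2 : (k : ℝ) * (x * θ) ≤ 1 := (le_div_iff₀ hxθpos).mp hfl
        rw [hcn, le_div_iff₀ (by nlinarith : (0:ℝ) < (k:ℝ) * θ)]
        nlinarith
    · rintro (rfl | ⟨n, hxl, hxu⟩)
      · exact ⟨by simp [Tmap]; linarith, le_rfl, hθ.le⟩
      · have hxpos : 0 < x := lt_of_lt_of_le (hppos n) hxl
        have hxθ' : x ≤ θ := le_trans hxu (hqθ n)
        have hxθpos : 0 < x * θ := mul_pos hxpos hθ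
        have hK : ((n : ℝ) + m) * θ = c n := rfl
        -- floor computation
        have hflow : ((n : ℝ) + m) ≤ 1 / (x * θ) := by
          rw [le_div_iff₀ hxθpos]
          have h2 : x * c n ≤ 1 := by
            have := (le_div_iff₀ (hcpos n)).mp hxu
            linarith
          rw [← hK] at h2
          nlinarith
        have h1 : 1 ≤ x * (a + c n) := by
          have := (div_le_iff₀ (hapos n)).mp hxl
          linarith
        have hcn' : c n = ((n : ℝ) + m) * θ := hK.symm
        have hfhigh : 1 / (x * θ) < ((n : ℝ) + m) + 1 := by
          rw [div_lt_iff₀ hxθpos]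
          have h2 : a + c n < (((n : ℝ) + m) + 1) * θ := by
            rw [hcn']; nlinarith
          linarith [mul_lt_mul_of_pos_left h2 hxpos]
        have hfloor : ⌊1 / (x * θ)⌋ = (n : ℤ) + m := by
          rw [Int.floor_eq_iff]
          constructor
          · push_cast; exact hflow
          · push_cast; exact hfhigh
        have h1x : 1 / x ≤ a + c n := by
          rw [div_le_iff₀ hxpos]
          linarith [h1, mul_comm x (a + c n)]
        refine ⟨?_, hxpos.le, hxθ'⟩
        rw [Tmap, if_neg hxpos.ne', ← hθdef, hfloor]
        have hcast : ((((n : ℤ) + (m:ℤ)) : ℤ) : ℝ) = (n : ℝ) + m := by push_cast; ring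
        rw [hcast]
        have hfin : θ * ((n : ℝ) + m) = c n := by rw [← hK]; ring
        rw [hfin]
        linarith
  rw [hset]
  have hIic : Iic a ∩ Icc 0 θ = Icc 0 a := by
    ext x
    simp only [mem_inter_iff, mem_Iic, mem_Icc]
    exact ⟨fun ⟨h1, h2, _⟩ => ⟨h2, h1⟩, fun ⟨h1, h2⟩ => ⟨h2, h1, le_trans h2 haθ.le⟩⟩
  rw [hIic]
  have h0 : ν {0} = 0 := by
    apply withDensity_absolutelyContinuous _ _
    rw [Measure.restrict_apply (measurableSet_singleton 0)]
    exact measure_mono_null inter_subset_left (volume_singleton)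
  have hdrop : ν ({0} ∪ ⋃ n : ℕ, Icc (1 / (a + c n)) (1 / c n)) =
      ν (⋃ n : ℕ, Icc (1 / (a + c n)) (1 / c n)) := by
    apply le_antisymm
    · calc ν ({0} ∪ ⋃ n : ℕ, Icc (1 / (a + c n)) (1 / c n))
          ≤ ν {0} + ν (⋃ n : ℕ, Icc (1 / (a + c n)) (1 / c n)) := measure_union_le _ _
      _ = ν (⋃ n : ℕ, Icc (1 / (a + c n)) (1 / c n)) := by rw [h0, zero_add]
    · exact measure_mono subset_union_right
  rw [hdrop]
  have hmono2 : ∀ i j : ℕ, i < j → 1 / c j < 1 / (a + c i) := by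
    intro i j hij
    apply one_div_lt_one_div_of_lt (hapos i)
    have h1 : ((i : ℝ)) + 1 ≤ j := by exact_mod_cast hij
    have h2 : c i + θ ≤ c j := by simp only [hc]; nlinarith
    linarith
  have hdkey : ∀ i j : ℕ, i < j →
      Disjoint (Icc (1 / (a + c i)) (1 / c i)) (Icc (1 / (a + c j)) (1 / c j)) := by
    intro i j h
    refine Set.disjoint_left.mpr fun x hxi hxj => ?_
    have := hmono2 i j h
    linarith [hxi.1, hxj.2]
  have hdisj : Pairwise (Function.onFun Disjoint fun n : ℕ => Icc (1 / (a + c n)) (1 / c n)) := by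
    intro i j hij
    rcases hij.lt_or_gt with h | h
    · exact hdkey i j h
    · exact (hdkey j i h).symm
  rw [measure_iUnion hdisj fun n => measurableSet_Icc]
  have hpiece : ∀ n : ℕ, ν (Icc (1 / (a + c n)) (1 / c n)) =
      ENNReal.ofReal (Real.log (1 + θ * (1 / c n)) - Real.log (1 + θ * (1 / (a + c n)))) := by
    intro n
    rw [hνapp _ measurableSet_Icc, inter_eq_left.mpr (hIsub n)]
    exact lint_Icc hm (hppos n).le (hpq n)
  have hR : ν (Icc 0 a) = ENNReal.ofReal (Real.log (1 + θ * a)) := by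
    rw [hνapp _ measurableSet_Icc, inter_eq_left.mpr (Icc_subset_Icc le_rfl haθ.le),
      lint_Icc hm le_rfl ha]
    norm_num
    rfl
  simp only [hpiece]
  rw [hR]
  set F : ℕ → ℝ := fun n => Real.log (1 + a / c n) with hF
  have hlog : ∀ n : ℕ, Real.log (1 + θ * (1 / c n)) - Real.log (1 + θ * (1 / (a + c n)))
      = F n - F (n + 1) := by
    intro n
    have hA : (0:ℝ) < c n + θ := by linarith [hcpos n]
    have hB : (0:ℝ) < a + c n + θ := by linarith [hapos n]
    have e1 : 1 + θ * (1 / c n) = (c n + θ) / c n := by field_simp [(hcpos n).ne']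
    have e2 : 1 + θ * (1 / (a + c n)) = (a + c n + θ) / (a + c n) := by
      field_simp [(hapos n).ne']
    have e3 : (1 : ℝ) + a / c n = (a + c n) / c n := by field_simp [(hcpos n).ne']; ring
    have e4 : (1 : ℝ) + a / c (n + 1) = (a + c n + θ) / (c n + θ) := by
      rw [hcsucc n]; field_simp [hA.ne']; ring
    simp only [hF]
    rw [e1, e2, e3, e4, Real.log_div hA.ne' (hcpos n).ne', Real.log_div hB.ne' (hapos n).ne',
      Real.log_div (hapos n).ne' (hcpos n).ne', Real.log_div hB.ne' hA.ne']
    ring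
  have hcmono : ∀ n, c n ≤ c (n + 1) := fun n => by rw [hcsucc n]; linarith
  have harg : ∀ n, (0:ℝ) < 1 + a / c n := fun n => by
    have := div_nonneg ha (hcpos n).le; linarith
  have hFanti : ∀ n, F (n + 1) ≤ F n := by
    intro n
    apply Real.log_le_log (harg (n + 1))
    have hdd : a / c (n + 1) ≤ a / c n := by
      rw [div_le_div_iff₀ (hcpos _) (hcpos _)]
      nlinarith [mul_le_mul_of_nonneg_left (hcmono n) ha]
    linarith
  have hctend : Filter.Tendsto c Filter.atTop Filter.atTop := by
    rw [hc]
    apply Filter.Tendsto.atTop_mul_const hθ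
    exact Filter.tendsto_atTop_add_const_right _ _ tendsto_natCast_atTop_atTop
  have hdiv0 : Filter.Tendsto (fun n => a / c n) Filter.atTop (nhds 0) :=
    Filter.Tendsto.div_atTop tendsto_const_nhds hctend
  have hFlim : Filter.Tendsto F Filter.atTop (nhds 0) := by
    have h1 : Filter.Tendsto (fun n => 1 + a / c n) Filter.atTop (nhds 1) := by
      simpa using tendsto_const_nhds.add hdiv0
    have h2 := ((Real.continuousAt_log one_ne_zero).tendsto).comp h1
    simpa [hF, Function.comp_def, Real.log_one] using h2
  have hF0 : F 0 = Real.log (1 + θ * a) := by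
    have hc0 : c 0 = 1 / θ := by
      simp only [hc, Nat.cast_zero, zero_add]
      exact hmθ'
    simp only [hF]
    congr 1
    rw [hc0]
    field_simp
  have hsum : HasSum (fun n => F n - F (n + 1)) (F 0) := by
    rw [hasSum_iff_tendsto_nat_of_nonneg (fun n => sub_nonneg.2 (hFanti n))]
    simp only [Finset.sum_range_sub' F]
    simpa using tendsto_const_nhds.sub hFlim
  calc ∑' n : ℕ, ENNReal.ofReal (Real.log (1 + θ * (1 / c n)) - Real.log (1 + θ * (1 / (a + c n))))
      = ∑' n : ℕ, ENNReal.ofReal (F n - F (n + 1)) := tsum_congr fun n => by rw [hlog n]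
    _ = ENNReal.ofReal (∑' n : ℕ, (F n - F (n + 1))) :=
        (ENNReal.ofReal_tsum_of_nonneg (fun n => sub_nonneg.2 (hFanti n)) hsum.summable).symm
    _ = ENNReal.ofReal (F 0) := by rw [hsum.tsum_eq]
    _ = ENNReal.ofReal (Real.log (1 + θ * a)) := by rw [hF0]

/-- γ_θ is invariant under T_θ: for every Borel A ⊆ [0,θ], γ_θ(T_θ⁻¹(A)) = γ_θ(A). -/
theorem gamma_invariant (m : ℕ) (hm : 2 ≤ m) (hns : ¬ IsSquare m) :
    ∀ A ⊆ Icc 0 (theta m), MeasurableSet A →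
      gammaMeasure m (Tmap m ⁻¹' A) = gammaMeasure m A := by
  have hm1 : 1 ≤ m := le_trans (by norm_num) hm
  intro A _ hA
  haveI := gamma_fin m hm1
  have hT := measurable_Tmap m
  have hmap : (gammaMeasure m).map (Tmap m) = gammaMeasure m := by
    haveI : IsFiniteMeasure ((gammaMeasure m).map (Tmap m)) := by
      constructor
      rw [Measure.map_apply hT MeasurableSet.univ]
      exact measure_lt_top _ _
    refine Measure.ext_of_Iic _ _ fun a => ?_
    rw [Measure.map_apply hT measurableSet_Iic]
    exact key_Iic m hm1 a
  rw [← Measure.map_apply hT hA, hmap]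
end

section
/- The operator U is the Perron-Frobenius operator of T_θ under γ_θ: for every f ∈ L¹([0,θ], γ_θ) and every Borel set A ⊆ [0,θ], ∫_A Uf dγ_θ = ∫_{T_θ⁻¹(A)} f dγ_θ, where Uf(x) = Σ_{i≥m} P_i(x)·f(u_i(x)). -/
open MeasureTheory Real Set
open scoped NNReal ENNReal

/-- u_i(x) = 1/(iθ + x). -/
noncomputable def uMap (m i : ℕ) (x : ℝ) : ℝ := 1 / (i * theta m + x)

/-- P_i(x) = (1+θx)/((x+iθ)(x+(i+1)θ)). -/
noncomputable def Pfun (m i : ℕ) (x : ℝ) : ℝ :=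
  (1 + theta m * x) / ((x + i * theta m) * (x + (i + 1) * theta m))

/-- The Perron-Frobenius operator Uf(x) = Σ_{i≥m} P_i(x)·f(u_i(x)). -/
noncomputable def Uop (m : ℕ) (f : ℝ → ℝ) (x : ℝ) : ℝ :=
  ∑' i : ℕ, Pfun m (i + m) x * f (uMap m (i + m) x)

namespace PF

/-- The density function. -/
noncomputable def dens (m : ℕ) (x : ℝ) : ℝ := theta m / (1 + theta m * x)

/-- The normalizing constant. -/
noncomputable def clog (m : ℕ) : ℝ := 1 / Real.log (1 + theta m ^ 2)

variable {m : ℕ}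

lemma m_pos (hm : 2 ≤ m) : (0:ℝ) < m := by
  have : (0:ℕ) < m := lt_of_lt_of_le (by norm_num) hm
  exact_mod_cast this

lemma theta_pos (hm : 2 ≤ m) : 0 < theta m :=
  div_pos one_pos (Real.sqrt_pos.2 (m_pos hm))

lemma theta_sq (hm : 2 ≤ m) : (m : ℝ) * theta m ^ 2 = 1 := by
  have h := m_pos hm
  rw [theta, div_pow, one_pow, Real.sq_sqrt h.le]
  field_simp

lemma clog_pos (hm : 2 ≤ m) : 0 < clog m := by
  have hθ := theta_pos hm
  have : (0:ℝ) < Real.log (1 + theta m ^ 2) :=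
    Real.log_pos (by nlinarith)
  exact div_pos one_pos this

lemma dens_pos (hm : 2 ≤ m) {x : ℝ} (hx : 0 ≤ x) : 0 < dens m x := by
  have hθ := theta_pos hm
  exact div_pos hθ (by nlinarith)

lemma dens_real_measurable : Measurable (dens m) := by
  unfold dens; fun_prop

lemma dens_measurable : Measurable fun x => ENNReal.ofReal (dens m x) :=
  ENNReal.measurable_ofReal.comp dens_real_measurable

lemma gamma_restrict {S : Set ℝ} (hS : MeasurableSet S) (hS' : S ⊆ Icc 0 (theta m)) :
    (gammaMeasure m).restrict S =
      (ENNReal.ofReal (clog m)) •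
        ((volume.restrict S).withDensity fun x => ENNReal.ofReal (dens m x)) := by
  rw [gammaMeasure, Measure.restrict_smul, restrict_withDensity hS,
    Measure.restrict_restrict hS, inter_eq_left.2 hS']
  rfl

lemma set_integral_gamma (hm : 2 ≤ m) {S : Set ℝ} (hS : MeasurableSet S)
    (hS' : S ⊆ Icc 0 (theta m)) (g : ℝ → ℝ) :
    ∫ x in S, g x ∂(gammaMeasure m) = clog m * ∫ x in S, dens m x * g x := by
  rw [gamma_restrict hS hS', integral_smul_measure,
    ENNReal.toReal_ofReal (clog_pos hm).le]
  rw [show (fun x => ENNReal.ofReal (dens m x))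
      = (fun x => ((Real.toNNReal (dens m x) : ℝ≥0) : ℝ≥0∞)) from rfl]
  rw [integral_withDensity_eq_integral_smul (dens_real_measurable.real_toNNReal)]
  rw [smul_eq_mul]
  congr 1
  refine setIntegral_congr_fun hS (fun x hx => ?_)
  have h0 : 0 ≤ dens m x := (dens_pos hm (hS' hx).1).le
  simp [NNReal.smul_def, Real.coe_toNNReal _ h0]

lemma set_lintegral_gamma (hm : 2 ≤ m) {S : Set ℝ} (hS : MeasurableSet S)
    (hS' : S ⊆ Icc 0 (theta m)) {g : ℝ → ℝ≥0∞} (hg : Measurable g) :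
    ∫⁻ x in S, g x ∂(gammaMeasure m) =
      ENNReal.ofReal (clog m) * ∫⁻ x in S, ENNReal.ofReal (dens m x) * g x := by
  rw [gamma_restrict hS hS', lintegral_smul_measure,
    lintegral_withDensity_eq_lintegral_mul _ dens_measurable hg]
  rfl

lemma gamma_ac : gammaMeasure m ≪ volume := by
  refine Measure.AbsolutelyContinuous.mk (fun s hs h0 => ?_)
  rw [gammaMeasure, Measure.smul_apply, withDensity_apply _ hs,
    Measure.restrict_restrict hs]
  have : volume (s ∩ Icc 0 (theta m)) = 0 :=
    measure_mono_null inter_subset_left h0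
  rw [Measure.restrict_eq_zero.2 this]
  simp

lemma vol_null_of_gamma_null (hm : 2 ≤ m) {S : Set ℝ} (hS' : S ⊆ Icc 0 (theta m))
    (h : gammaMeasure m S = 0) : volume S = 0 := by
  obtain ⟨N, hSN, hNmeas, hN0⟩ := exists_measurable_superset_of_null h
  rw [gammaMeasure, Measure.smul_apply, withDensity_apply _ hNmeas,
    Measure.restrict_restrict hNmeas] at hN0
  have hc : (ENNReal.ofReal (clog m)) ≠ 0 := by
    simp [ENNReal.ofReal_eq_zero, not_le, clog_pos hm]
  rw [smul_eq_mul, mul_eq_zero] at hN0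
  rcases hN0 with h' | h'
  · exact absurd h' hc
  · have hmeas : MeasurableSet (N ∩ Icc 0 (theta m)) := hNmeas.inter measurableSet_Icc
    have hrw : (fun a : ℝ => ENNReal.ofReal (theta m / (1 + theta m * a)))
        = fun a => ENNReal.ofReal (dens m a) := rfl
    rw [hrw] at h'
    rw [lintegral_eq_zero_iff dens_measurable] at h'
    have : volume ((N ∩ Icc 0 (theta m)) ∩ {x | ENNReal.ofReal (dens m x) ≠ 0}) = 0 := by
      have := h'
      rw [Filter.EventuallyEq, ae_iff, Measure.restrict_apply'] at this
      · simpa [Set.inter_comm] using this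
      · exact hmeas
    have hsub : S ⊆ (N ∩ Icc 0 (theta m)) ∩ {x | ENNReal.ofReal (dens m x) ≠ 0} := by
      intro x hx
      refine ⟨⟨hSN hx, hS' hx⟩, ?_⟩
      simp only [mem_setOf_eq, ne_eq, ENNReal.ofReal_eq_zero, not_le]
      exact dens_pos hm (hS' hx).1
    exact measure_mono_null hsub this

lemma u_injective (m i : ℕ) : Function.Injective (uMap m i) := by
  intro a b h
  have := congrArg (fun t => 1 / t) h
  simpa [uMap, one_div_one_div] using this

lemma u_measurable (m i : ℕ) : Measurable (uMap m i) := by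
  unfold uMap; fun_prop

lemma u_embedding (m i : ℕ) : MeasurableEmbedding (uMap m i) :=
  (u_measurable m i).measurableEmbedding (u_injective m i)

lemma d_lb (hm : 2 ≤ m) {i : ℕ} (hi : m ≤ i) {x : ℝ} (hx : 0 ≤ x) :
    1 ≤ theta m * ((i:ℝ) * theta m + x) := by
  have hθ := theta_pos hm
  have hcast : (m:ℝ) ≤ (i:ℝ) := by exact_mod_cast hi
  have := theta_sq hm
  nlinarith

lemma d_pos (hm : 2 ≤ m) {i : ℕ} (hi : m ≤ i) {x : ℝ} (hx : 0 ≤ x) :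
    0 < (i:ℝ) * theta m + x := by
  have hθ := theta_pos hm
  nlinarith [d_lb hm hi hx]

lemma u_pos (hm : 2 ≤ m) {i : ℕ} (hi : m ≤ i) {x : ℝ} (hx : 0 ≤ x) :
    0 < uMap m i x :=
  div_pos one_pos (d_pos hm hi hx)

lemma u_le_theta (hm : 2 ≤ m) {i : ℕ} (hi : m ≤ i) {x : ℝ} (hx : 0 ≤ x) :
    uMap m i x ≤ theta m := by
  rw [uMap, div_le_iff₀ (d_pos hm hi hx)]
  have := d_lb hm hi hx
  nlinarith

lemma u_mem_Icc (hm : 2 ≤ m) {i : ℕ} (hi : m ≤ i) {x : ℝ} (hx : x ∈ Icc 0 (theta m)) :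
    uMap m i x ∈ Icc (1 / (((i:ℝ) + 1) * theta m)) (theta m) := by
  have hθ := theta_pos hm
  have hd := d_pos hm hi hx.1
  constructor
  · rw [uMap, div_le_div_iff₀ (by positivity) hd]
    nlinarith [hx.2]
  · exact u_le_theta hm hi hx.1

lemma u_mem_Ioc (hm : 2 ≤ m) {i : ℕ} (hi : m ≤ i) {x : ℝ} (hx : x ∈ Ico 0 (theta m)) :
    uMap m i x ∈ Ioc (1 / (((i:ℝ) + 1) * theta m)) (1 / ((i:ℝ) * theta m)) := by
  have hθ := theta_pos hm
  have hd := d_pos hm hi hx.1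
  have hipos : 0 < (i:ℝ) * theta m := by
    have : (2:ℝ) ≤ (i:ℝ) := by exact_mod_cast le_trans hm hi
    nlinarith
  constructor
  · rw [uMap, div_lt_div_iff₀ (by positivity) hd]
    nlinarith [hx.2]
  · rw [uMap, div_le_div_iff₀ hd hipos]
    nlinarith [hx.1]

lemma Pfun_pos (hm : 2 ≤ m) {i : ℕ} (hi : m ≤ i) {x : ℝ} (hx : 0 ≤ x) :
    0 < Pfun m i x := by
  have hθ := theta_pos hm
  have hd := d_pos hm hi hx
  rw [Pfun]
  push_cast
  have h2 : (2:ℝ) ≤ (i:ℝ) := by exact_mod_cast le_trans hm hi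
  exact div_pos (by nlinarith) (mul_pos (by nlinarith) (by nlinarith))

/-- The key pointwise algebraic identity. -/
lemma key_algebra (hm : 2 ≤ m) {i : ℕ} (hi : m ≤ i) {x : ℝ} (hx : 0 ≤ x) :
    dens m x * Pfun m i x =
      |-(1 / (((i:ℝ) * theta m + x) ^ 2))| * dens m (uMap m i x) := by
  have hθ := theta_pos hm
  have hd := d_pos hm hi hx
  have h1 : (0:ℝ) < 1 + theta m * x := by nlinarith
  have hu := u_pos hm hi hx
  have h2 : (0:ℝ) < 1 + theta m * uMap m i x := by nlinarith
  rw [abs_neg, abs_of_pos (by positivity)]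
  have hdu : dens m (uMap m i x)
      = theta m * ((i:ℝ) * theta m + x) / (((i:ℝ) * theta m + x) + theta m) := by
    rw [dens, uMap]
    have hd' := hd.ne'
    have hu' : 0 < 1 / ((i:ℝ) * theta m + x) := by positivity
    rw [div_eq_div_iff (by nlinarith) (by nlinarith)]
    field_simp
    rw [mul_one_add, mul_div_cancel₀ _ (by rw [mul_comm]; exact hd')]
  rw [hdu, dens, Pfun]
  push_cast
  have e1 : (1 + theta m * x) ≠ 0 := h1.ne'
  have e2 : ((i:ℝ) * theta m + x) ≠ 0 := hd.ne'
  have e3 : ((i:ℝ) * theta m + x + theta m) ≠ 0 := by nlinarith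
  have e4 : (x + (i:ℝ) * theta m) ≠ 0 := by nlinarith
  have e5 : (x + ((i:ℝ) + 1) * theta m) ≠ 0 := by nlinarith
  field_simp
  ring

lemma hasDeriv_u (m i : ℕ) {x : ℝ} (hx : (i:ℝ) * theta m + x ≠ 0) :
    HasDerivAt (uMap m i) (-(1 / (((i:ℝ) * theta m + x) ^ 2))) x := by
  have h : HasDerivAt (fun y : ℝ => ((i:ℝ) * theta m + y)) 1 x :=
    (hasDerivAt_id x).const_add _
  have h3 := h.inv hx
  have huf : uMap m i = fun y => ((i:ℝ) * theta m + y)⁻¹ := by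
    funext y; rw [uMap, one_div]
  rw [huf]
  refine h3.congr_deriv ?_
  ring

/-- 1-D lintegral change of variables. -/
lemma lintegral_image_1d {s : Set ℝ} {f f' : ℝ → ℝ} (hs : MeasurableSet s)
    (hf' : ∀ x ∈ s, HasDerivWithinAt f (f' x) s x) (hf : InjOn f s) (g : ℝ → ℝ≥0∞) :
    ∫⁻ x in f '' s, g x = ∫⁻ x in s, ENNReal.ofReal |f' x| * g (f x) := by
  simpa only [ContinuousLinearMap.det_toSpanSingleton] using
    lintegral_image_eq_lintegral_abs_det_fderiv_mul volume hs
      (fun x hx => (hf' x hx).hasFDerivWithinAt) hf g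


lemma image_subset_Icc (hm : 2 ≤ m) {i : ℕ} (hi : m ≤ i) {A : Set ℝ}
    (hA' : A ⊆ Icc 0 (theta m)) : uMap m i '' A ⊆ Icc 0 (theta m) := by
  rintro _ ⟨x, hx, rfl⟩
  exact ⟨(u_pos hm hi (hA' hx).1).le, u_le_theta hm hi (hA' hx).1⟩

lemma cov_deriv (hm : 2 ≤ m) {i : ℕ} (hi : m ≤ i) {A : Set ℝ}
    (hA' : A ⊆ Icc 0 (theta m)) :
    ∀ x ∈ A, HasDerivWithinAt (uMap m i) (-(1 / (((i:ℝ) * theta m + x) ^ 2))) A x :=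
  fun x hx => (hasDeriv_u m i (d_pos hm hi (hA' hx).1).ne').hasDerivWithinAt

lemma cov_integral (hm : 2 ≤ m) {i : ℕ} (hi : m ≤ i) {A : Set ℝ} (hA : MeasurableSet A)
    (hA' : A ⊆ Icc 0 (theta m)) (g : ℝ → ℝ) :
    ∫ y in uMap m i '' A, g y ∂(gammaMeasure m) =
      ∫ x in A, Pfun m i x * g (uMap m i x) ∂(gammaMeasure m) := by
  have himg : MeasurableSet (uMap m i '' A) := ((u_embedding m i).measurableSet_image).2 hA
  rw [set_integral_gamma hm himg (image_subset_Icc hm hi hA'),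
    set_integral_gamma hm hA hA']
  congr 1
  rw [integral_image_eq_integral_abs_deriv_smul hA (cov_deriv hm hi hA')
    ((u_injective m i).injOn) (fun y => dens m y * g y)]
  refine setIntegral_congr_fun hA (fun x hx => ?_)
  have h := key_algebra hm hi (hA' hx).1
  rw [smul_eq_mul, ← mul_assoc, ← h, mul_assoc]

lemma cov_lintegral (hm : 2 ≤ m) {i : ℕ} (hi : m ≤ i) {A : Set ℝ} (hA : MeasurableSet A)
    (hA' : A ⊆ Icc 0 (theta m)) {g : ℝ → ℝ≥0∞} (hg : Measurable g) :
    ∫⁻ y in uMap m i '' A, g y ∂(gammaMeasure m) =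
      ∫⁻ x in A, ENNReal.ofReal (Pfun m i x) * g (uMap m i x) ∂(gammaMeasure m) := by
  have himg : MeasurableSet (uMap m i '' A) := ((u_embedding m i).measurableSet_image).2 hA
  rw [set_lintegral_gamma hm himg (image_subset_Icc hm hi hA') hg,
    set_lintegral_gamma hm hA hA'
      (g := fun x => ENNReal.ofReal (Pfun m i x) * g (uMap m i x))
      (by
        apply Measurable.mul
        · apply ENNReal.measurable_ofReal.comp
          unfold Pfun; fun_prop
        · exact hg.comp (u_measurable m i))]
  congr 1
  rw [lintegral_image_1d hA (cov_deriv hm hi hA') ((u_injective m i).injOn)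
    (fun y => ENNReal.ofReal (dens m y) * g y)]
  refine setLIntegral_congr_fun hA (fun x hx => ?_)
  have h := key_algebra hm hi (hA' hx).1
  rw [← mul_assoc, ← mul_assoc, ← ENNReal.ofReal_mul (abs_nonneg _),
    ← ENNReal.ofReal_mul (dens_pos hm (hA' hx).1).le, ← h]

lemma T_u (hm : 2 ≤ m) {i : ℕ} (hi : m ≤ i) {y : ℝ} (hy : y ∈ Ico 0 (theta m)) :
    Tmap m (uMap m i y) = y := by
  have hθ := theta_pos hm
  have hd := d_pos hm hi hy.1
  have hu := u_pos hm hi hy.1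
  rw [Tmap, if_neg hu.ne']
  have hinv : 1 / uMap m i y = (i:ℝ) * theta m + y := by rw [uMap, one_div_one_div]
  have hfloor : ⌊1 / (uMap m i y * theta m)⌋ = (i:ℤ) := by
    have heq : 1 / (uMap m i y * theta m) = (i:ℝ) + y / theta m := by
      rw [uMap]; field_simp
    rw [heq]
    have h0 : 0 ≤ y / theta m := div_nonneg hy.1 hθ.le
    have h1 : y / theta m < 1 := (div_lt_one hθ).2 hy.2
    rw [Int.floor_eq_iff]
    constructor
    · push_cast; linarith
    · push_cast; linarith
  rw [hfloor, hinv]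
  push_cast
  ring

lemma decomp (hm : 2 ≤ m) {A : Set ℝ} (hA' : A ⊆ Icc 0 (theta m)) :
    Tmap m ⁻¹' A ∩ Ioc 0 (theta m) =
      ⋃ j : ℕ, uMap m (j + m) '' (A ∩ Ico 0 (theta m)) := by
  have hθ := theta_pos hm
  ext x
  simp only [mem_inter_iff, mem_preimage, mem_iUnion, mem_image, mem_Ioc, mem_Ico]
  constructor
  · rintro ⟨hTA, hx0, hxθ⟩
    set n : ℤ := ⌊1 / (x * theta m)⌋ with hn
    have hxθpos : 0 < x * theta m := mul_pos hx0 hθ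
    have hmn : (m:ℤ) ≤ n := by
      rw [hn]
      apply Int.le_floor.2
      push_cast
      rw [le_div_iff₀ hxθpos]
      have hts := theta_sq hm
      nlinarith [hA' hTA]
    have hfl : (n:ℝ) ≤ 1 / (x * theta m) := Int.floor_le _
    have hfu : 1 / (x * theta m) < n + 1 := Int.lt_floor_add_one _
    have hrx : 1 / x = (1 / (x * theta m)) * theta m := by field_simp
    have hT : Tmap m x = 1 / x - theta m * n := by rw [Tmap, if_neg hx0.ne']
    have hT0 : 0 ≤ Tmap m x := by rw [hT, hrx]; nlinarith
    have hT1 : Tmap m x < theta m := by rw [hT, hrx]; nlinarith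
    set j : ℕ := (n - m).toNat with hj
    have h1 : ((n - (m:ℤ)).toNat : ℤ) = n - m := Int.toNat_of_nonneg (by linarith)
    have hjm : ((j + m : ℕ) : ℝ) = (n : ℝ) := by
      have := congrArg (fun z : ℤ => (z : ℝ)) h1
      push_cast at this ⊢
      linarith
    refine ⟨j, Tmap m x, ⟨hTA, hT0, hT1⟩, ?_⟩
    rw [uMap, hT, hjm]
    have : (n:ℝ) * theta m + (1 / x - theta m * n) = 1 / x := by ring
    rw [this, one_div_one_div]
  · rintro ⟨j, y, ⟨hyA, hy0, hyθ⟩, rfl⟩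
    have hi : m ≤ j + m := Nat.le_add_left m j
    refine ⟨?_, u_pos hm hi hy0, u_le_theta hm hi hy0⟩
    rw [T_u hm hi ⟨hy0, hyθ⟩]
    exact hyA

lemma disj (hm : 2 ≤ m) {A : Set ℝ} (hA' : A ⊆ Ico 0 (theta m)) :
    Pairwise (Function.onFun Disjoint fun j : ℕ => uMap m (j + m) '' A) := by
  have hθ := theta_pos hm
  have key : ∀ j k : ℕ, j < k →
      Disjoint (uMap m (j + m) '' A) (uMap m (k + m) '' A) := by
    intro j k hjk
    rw [Set.disjoint_left]
    rintro a ⟨y, hy, rfl⟩ ⟨z, hz, hzy⟩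
    have h1 := u_mem_Ioc hm (Nat.le_add_left m j) (hA' hy)
    have h2 := u_mem_Ioc hm (Nat.le_add_left m k) (hA' hz)
    rw [hzy] at h2
    have hcast : (((j + m : ℕ) : ℝ) + 1) ≤ ((k + m : ℕ) : ℝ) := by
      push_cast
      have : (j : ℝ) + 1 ≤ k := by exact_mod_cast hjk
      linarith
    have hp1 : 0 < (((j + m : ℕ) : ℝ) + 1) * theta m := by
      have : (0:ℝ) ≤ ((j + m : ℕ) : ℝ) := Nat.cast_nonneg _
      nlinarith
    have hmono : 1 / (((k + m : ℕ) : ℝ) * theta m) ≤ 1 / ((((j + m : ℕ) : ℝ) + 1) * theta m) := by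
      apply one_div_le_one_div_of_le hp1
      nlinarith
    have := h1.1
    have := h2.2
    linarith
  intro j k hjk
  rcases hjk.lt_or_gt with h | h
  · exact key j k h
  · exact (key k j h).symm

lemma gamma_compl_Icc : gammaMeasure m ((Icc 0 (theta m))ᶜ) = 0 := by
  rw [gammaMeasure, Measure.smul_apply, withDensity_apply _ measurableSet_Icc.compl,
    Measure.restrict_restrict measurableSet_Icc.compl, compl_inter_self,
    Measure.restrict_empty, lintegral_zero_measure]
  simp

lemma f_eq_ae (hm : 2 ≤ m) {f g : ℝ → ℝ} (hfg : f =ᵐ[gammaMeasure m] g)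
    {i : ℕ} (hi : m ≤ i) {A : Set ℝ} (hA : MeasurableSet A)
    (hA' : A ⊆ Icc 0 (theta m)) :
    ∀ᵐ x ∂(gammaMeasure m).restrict A, f (uMap m i x) = g (uMap m i x) := by
  have hθ := theta_pos hm
  rw [ae_iff, Measure.restrict_apply' hA]
  have hN : gammaMeasure m {y | f y ≠ g y} = 0 := by
    rw [Filter.EventuallyEq, ae_iff] at hfg
    exact hfg
  have hvol : volume ({y | f y ≠ g y} ∩ Icc 0 (theta m)) = 0 :=
    vol_null_of_gamma_null hm inter_subset_right
      (measure_mono_null inter_subset_left hN)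
  set lo : ℝ := 1 / (((i:ℝ) + 1) * theta m) with hlo
  have hlopos : 0 < lo := by
    rw [hlo]
    have : (0:ℝ) ≤ (i:ℝ) := Nat.cast_nonneg _
    positivity
  have hS0 : volume ({y | f y ≠ g y} ∩ Icc lo (theta m)) = 0 := by
    apply measure_mono_null _ hvol
    intro y ⟨hy1, hy2⟩
    exact ⟨hy1, le_trans hlopos.le hy2.1, hy2.2⟩
  have hv : volume ((fun y => 1 / y - (i:ℝ) * theta m) ''
      ({y | f y ≠ g y} ∩ Icc lo (theta m))) = 0 := by
    apply addHaar_image_eq_zero_of_differentiableOn_of_addHaar_eq_zero volume _ hS0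
    intro y hy
    have hy0 : y ≠ 0 := (lt_of_lt_of_le hlopos hy.2.1).ne'
    apply DifferentiableAt.differentiableWithinAt
    exact ((differentiableAt_const (1:ℝ)).div differentiableAt_id hy0).sub
      (differentiableAt_const _)
  apply measure_mono_null _ (gamma_ac hv)
  rintro x ⟨hx, hxA⟩
  refine ⟨uMap m i x, ⟨hx, u_mem_Icc hm hi (hA' hxA)⟩, ?_⟩
  simp only [uMap, one_div_one_div]
  ring

lemma Pfun_measurable (m i : ℕ) : Measurable (Pfun m i) := by
  unfold Pfun; fun_prop

lemma core (hm : 2 ≤ m) {f : ℝ → ℝ} (hfm : Measurable f)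
    (hf : Integrable f (gammaMeasure m)) {A : Set ℝ}
    (hAsub : A ⊆ Icc 0 (theta m)) (hA : MeasurableSet A) :
    ∫ x in A, Uop m f x ∂(gammaMeasure m) =
      ∫ x in Tmap m ⁻¹' A, f x ∂(gammaMeasure m) := by
  have hθ := theta_pos hm
  set γ := gammaMeasure m with hγ
  have hA'm : MeasurableSet (A ∩ Ico 0 (theta m)) := hA.inter measurableSet_Ico
  have hA'sub : A ∩ Ico 0 (theta m) ⊆ Ico 0 (theta m) := inter_subset_right
  have hA'Icc : A ∩ Ico 0 (theta m) ⊆ Icc 0 (theta m) :=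
    fun x hx => Ico_subset_Icc_self hx.2
  have hAae : A =ᵐ[γ] (A ∩ Ico 0 (theta m) : Set ℝ) := by
    rw [ae_eq_set]
    constructor
    · refine measure_mono_null (fun x hx => ?_)
        (gamma_ac (show volume {theta m} = 0 from Real.volume_singleton))
      obtain ⟨hxA, hx'⟩ := hx
      have hxI := hAsub hxA
      simp only [mem_inter_iff, mem_Ico, not_and, not_lt] at hx'
      have hge : theta m ≤ x := hx' hxA hxI.1
      simp only [mem_singleton_iff]
      linarith [hxI.2]
    · have hempty : (A ∩ Ico 0 (theta m)) \ A = ∅ := by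
        rw [diff_eq_empty]; exact inter_subset_left
      rw [hempty]; simp
  have hTAae : Tmap m ⁻¹' A =ᵐ[γ] (Tmap m ⁻¹' A ∩ Ioc 0 (theta m) : Set ℝ) := by
    rw [ae_eq_set]
    constructor
    · refine measure_mono_null (fun x hx => ?_)
        (measure_union_null gamma_compl_Icc
          (gamma_ac (show volume {(0:ℝ)} = 0 from Real.volume_singleton)))
      obtain ⟨hxT, hx'⟩ := hx
      by_cases hxI : x ∈ Icc 0 (theta m)
      · right
        simp only [mem_inter_iff, mem_Ioc, not_and, not_le] at hx'
        simp only [mem_singleton_iff]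
        by_contra h0
        have hlt : 0 < x := lt_of_le_of_ne hxI.1 (Ne.symm h0)
        have := hx' hxT hlt
        linarith [hxI.2]
      · exact Or.inl hxI
    · have hempty : (Tmap m ⁻¹' A ∩ Ioc 0 (theta m)) \ Tmap m ⁻¹' A = ∅ := by
        rw [diff_eq_empty]; exact inter_subset_left
      rw [hempty]; simp
  have hmeasim : ∀ j : ℕ, MeasurableSet (uMap m (j + m) '' (A ∩ Ico 0 (theta m))) :=
    fun j => ((u_embedding m (j + m)).measurableSet_image).2 hA'm
  have hdisj := disj hm hA'sub
  calc
    ∫ x in A, Uop m f x ∂γ = ∫ x in A ∩ Ico 0 (theta m), Uop m f x ∂γ := by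
      rw [Measure.restrict_congr_set hAae]
    _ = ∑' j : ℕ, ∫ x in A ∩ Ico 0 (theta m),
          Pfun m (j + m) x * f (uMap m (j + m) x) ∂γ := by
      simp only [Uop]
      apply integral_tsum
      · intro j
        exact ((Pfun_measurable m (j + m)).mul
          (hfm.comp (u_measurable m (j + m)))).aestronglyMeasurable
      · have heach : ∀ j : ℕ,
            ∫⁻ x in A ∩ Ico 0 (theta m),
              ‖Pfun m (j + m) x * f (uMap m (j + m) x)‖₊ ∂γ =
            ∫⁻ y in uMap m (j + m) '' (A ∩ Ico 0 (theta m)), ‖f y‖₊ ∂γ := by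
          intro j
          rw [cov_lintegral hm (Nat.le_add_left m j) hA'm hA'Icc
            (g := fun y => (‖f y‖₊ : ℝ≥0∞)) (hfm.nnnorm.coe_nnreal_ennreal)]
          refine setLIntegral_congr_fun hA'm (fun x hx => ?_)
          rw [nnnorm_mul, ENNReal.coe_mul, ← enorm_eq_nnnorm,
            Real.enorm_eq_ofReal (Pfun_pos hm (Nat.le_add_left m j) hx.2.1).le]
        rw [ne_eq]
        intro htop
        have hle : (∑' j : ℕ, ∫⁻ x in A ∩ Ico 0 (theta m),
            ‖Pfun m (j + m) x * f (uMap m (j + m) x)‖₊ ∂γ) ≤ ∫⁻ y, ‖f y‖₊ ∂γ := by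
          rw [tsum_congr heach, ← lintegral_iUnion hmeasim hdisj]
          exact setLIntegral_le_lintegral _ _
        simp only [enorm_eq_nnnorm] at htop
        rw [htop] at hle
        exact absurd (lt_of_le_of_lt hle hf.2) (by simp)
    _ = ∑' j : ℕ, ∫ y in uMap m (j + m) '' (A ∩ Ico 0 (theta m)), f y ∂γ :=
      tsum_congr fun j => (cov_integral hm (Nat.le_add_left m j) hA'm hA'Icc f).symm
    _ = ∫ y in ⋃ j : ℕ, uMap m (j + m) '' (A ∩ Ico 0 (theta m)), f y ∂γ :=
      (integral_iUnion hmeasim hdisj hf.integrableOn).symm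
    _ = ∫ y in Tmap m ⁻¹' A ∩ Ioc 0 (theta m), f y ∂γ := by
      rw [← decomp hm hAsub]
    _ = ∫ y in Tmap m ⁻¹' A, f y ∂γ := by
      rw [Measure.restrict_congr_set hTAae]

end PF


/-- U is the Perron-Frobenius operator of T_θ under γ_θ:
∫_A Uf dγ_θ = ∫_{T_θ⁻¹(A)} f dγ_θ for every f ∈ L¹(γ_θ) and Borel A ⊆ [0,θ]. -/
theorem Uop_perron_frobenius (m : ℕ) (hm : 2 ≤ m) (hns : ¬ IsSquare m)
    (f : ℝ → ℝ) (hf : Integrable f (gammaMeasure m)) :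
    ∀ A ⊆ Icc 0 (theta m), MeasurableSet A →
      ∫ x in A, Uop m f x ∂(gammaMeasure m) =
        ∫ x in (Tmap m) ⁻¹' A, f x ∂(gammaMeasure m) := by
  intro A hAsub hA
  have hfm := hf.1
  set f₀ := hfm.mk f with hf₀def
  have hfeq : f =ᵐ[gammaMeasure m] f₀ := hfm.ae_eq_mk
  have hf₀m : Measurable f₀ := hfm.stronglyMeasurable_mk.measurable
  have hf₀i : Integrable f₀ (gammaMeasure m) := hf.congr hfeq
  have hRHS : ∫ x in Tmap m ⁻¹' A, f x ∂(gammaMeasure m) =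
      ∫ x in Tmap m ⁻¹' A, f₀ x ∂(gammaMeasure m) :=
    integral_congr_ae (ae_restrict_of_ae hfeq)
  have hLHS : ∫ x in A, Uop m f x ∂(gammaMeasure m) =
      ∫ x in A, Uop m f₀ x ∂(gammaMeasure m) := by
    apply integral_congr_ae
    have hall : ∀ᵐ x ∂(gammaMeasure m).restrict A,
        ∀ j : ℕ, f (uMap m (j + m) x) = f₀ (uMap m (j + m) x) := by
      rw [ae_all_iff]
      intro j
      exact PF.f_eq_ae hm hfeq (Nat.le_add_left m j) hA hAsub
    filter_upwards [hall] with x hx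
    unfold Uop
    exact tsum_congr fun j => by rw [hx j]
  rw [hLHS, hRHS]
  exact PF.core hm hf₀m hf₀i hAsub hA
end

section
/- For every integer m ≥ 2, the constant q = m·Σ_{i≥m} ( m/(i³(i+1)) + (i+1−m)/(i(i+1)³) ) satisfies 0 < q < θ, where θ = 1/√m. -/
open MeasureTheory Real Set

/-- q = m·Σ_{i≥m} ( m/(i³(i+1)) + (i+1−m)/(i(i+1)³) ). -/
noncomputable def qConst (m : ℕ) : ℝ :=
  m * ∑' i : ℕ,
    ((m : ℝ) / (((i + m : ℕ) : ℝ) ^ 3 * (((i + m : ℕ) : ℝ) + 1)) +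
      ((((i + m : ℕ) : ℝ) + 1 - (m : ℝ)) /
        (((i + m : ℕ) : ℝ) * (((i + m : ℕ) : ℝ) + 1) ^ 3)))

lemma key_ineq (M x : ℝ) (hM : 2 ≤ M) (hx : M ≤ x) :
    M / (x ^ 3 * (x + 1)) + (x + 1 - M) / (x * (x + 1) ^ 3)
      ≤ (1 / 2 + 1 / (M + 1)) * (1 / x ^ 2 - 1 / (x + 1) ^ 2) := by
  have hx0 : (0:ℝ) < x := by linarith
  have hx1 : (0:ℝ) < x + 1 := by linarith
  have hM1 : (0:ℝ) < M + 1 := by linarith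
  have hdiff : (1 / 2 + 1 / (M + 1)) * (1 / x ^ 2 - 1 / (x + 1) ^ 2)
      - (M / (x ^ 3 * (x + 1)) + (x + 1 - M) / (x * (x + 1) ^ 3))
      = (4 * x ^ 3 + (M + 7) * x ^ 2 - (4 * M ^ 2 + 3 * M - 3) * x - 2 * M ^ 2 - 2 * M)
        / (2 * (M + 1) * x ^ 3 * (x + 1) ^ 3) := by
    field_simp
    ring
  have ht : (0:ℝ) ≤ x - M := by linarith
  have hMp : (0:ℝ) ≤ M := by linarith
  have hnum : 0 ≤ 4 * x ^ 3 + (M + 7) * x ^ 2 - (4 * M ^ 2 + 3 * M - 3) * x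
      - 2 * M ^ 2 - 2 * M := by
    nlinarith [mul_nonneg (mul_nonneg ht ht) ht, mul_nonneg ht ht,
      mul_nonneg (mul_nonneg ht ht) hMp, mul_nonneg (mul_nonneg ht hMp) hMp,
      mul_nonneg ht hMp, mul_nonneg (mul_nonneg hMp hMp) hMp, mul_nonneg hMp hMp]
  have hden : (0:ℝ) < 2 * (M + 1) * x ^ 3 * (x + 1) ^ 3 := by positivity
  have := div_nonneg hnum hden.le
  linarith [hdiff ▸ this]

/-- Telescoping sum. -/
lemma hasSum_b (m : ℕ) (hm : 2 ≤ m) :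
    HasSum (fun i : ℕ => 1 / (((i + m : ℕ) : ℝ)) ^ 2 - 1 / (((i + m : ℕ) : ℝ) + 1) ^ 2)
      (1 / (m : ℝ) ^ 2) := by
  set g : ℕ → ℝ := fun i => 1 / (((i + m : ℕ) : ℝ)) ^ 2 with hg
  have hnonneg : ∀ i : ℕ, 0 ≤ g i - g (i + 1) := by
    intro i
    have h1 : ((i + m : ℕ) : ℝ) ≤ ((i + 1 + m : ℕ) : ℝ) := by
      exact_mod_cast Nat.add_le_add_right (Nat.le_succ i) m
    have h0 : (0:ℝ) < ((i + m : ℕ) : ℝ) := by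
      have : 0 < i + m := by omega
      exact_mod_cast this
    have := one_div_le_one_div_of_le (by positivity) (pow_le_pow_left₀ h0.le h1 2)
    simpa [hg] using this
  have hgt : Filter.Tendsto g Filter.atTop (nhds 0) := by
    have h1 : Filter.Tendsto (fun i : ℕ => ((i + m : ℕ) : ℝ)) Filter.atTop Filter.atTop := by
      apply Filter.tendsto_atTop_mono (fun i => ?_) tendsto_natCast_atTop_atTop
      exact_mod_cast Nat.le_add_right i m
    have h2 : Filter.Tendsto (fun i : ℕ => (((i + m : ℕ) : ℝ)) ^ 2) Filter.atTop Filter.atTop :=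
      (Filter.tendsto_pow_atTop two_ne_zero).comp h1
    simpa [hg, one_div, Pi.inv_def] using h2.inv_tendsto_atTop
  have key : HasSum (fun i : ℕ => g i - g (i + 1)) (g 0) := by
    rw [hasSum_iff_tendsto_nat_of_nonneg hnonneg]
    have : ∀ n : ℕ, ∑ i ∈ Finset.range n, (g i - g (i + 1)) = g 0 - g n := by
      intro n; exact Finset.sum_range_sub' g n
    simp_rw [this]
    simpa using (tendsto_const_nhds.sub hgt)
  have hg0 : g 0 = 1 / (m : ℝ) ^ 2 := by simp [hg]
  have hcast : ∀ i : ℕ, g (i + 1) = 1 / (((i + m : ℕ) : ℝ) + 1) ^ 2 := by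
    intro i
    have : ((i + 1 + m : ℕ) : ℝ) = ((i + m : ℕ) : ℝ) + 1 := by push_cast; ring
    simp [hg, this]
    push_cast
    ring
  rw [hg0] at key
  convert key using 2 with i
  rw [hcast]

/-- For every integer m ≥ 2, the constant q satisfies 0 < q < θ where θ = 1/√m. -/
theorem qConst_lt_theta (m : ℕ) (hm : 2 ≤ m) :
    0 < qConst m ∧ qConst m < theta m := by
  have hm0 : (0:ℝ) < m := by exact_mod_cast Nat.lt_of_lt_of_le two_pos hm
  have hm2 : (2:ℝ) ≤ m := by exact_mod_cast hm
  set f : ℕ → ℝ := fun i =>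
    ((m : ℝ) / (((i + m : ℕ) : ℝ) ^ 3 * (((i + m : ℕ) : ℝ) + 1)) +
      ((((i + m : ℕ) : ℝ) + 1 - (m : ℝ)) /
        (((i + m : ℕ) : ℝ) * (((i + m : ℕ) : ℝ) + 1) ^ 3))) with hf
  have hxm : ∀ i : ℕ, (m : ℝ) ≤ ((i + m : ℕ) : ℝ) := by
    intro i; exact_mod_cast Nat.le_add_left m i
  have hxpos : ∀ i : ℕ, (0:ℝ) < ((i + m : ℕ) : ℝ) := fun i => lt_of_lt_of_le hm0 (hxm i)
  have hfpos : ∀ i : ℕ, 0 < f i := by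
    intro i
    have h0 := hxpos i
    have h1 : (0:ℝ) < ((i + m : ℕ) : ℝ) + 1 - (m : ℝ) := by
      have := hxm i; linarith
    have : (0:ℝ) < ((i + m : ℕ) : ℝ) + 1 := by linarith
    exact add_pos (by positivity) (by positivity)
  set C : ℝ := 1 / 2 + 1 / ((m : ℝ) + 1) with hC
  set b : ℕ → ℝ := fun i =>
    1 / (((i + m : ℕ) : ℝ)) ^ 2 - 1 / (((i + m : ℕ) : ℝ) + 1) ^ 2 with hb
  have hble : ∀ i : ℕ, f i ≤ C * b i := fun i =>
    key_ineq (m : ℝ) (((i + m : ℕ) : ℝ)) hm2 (hxm i)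
  have hbsum : HasSum b (1 / (m : ℝ) ^ 2) := hasSum_b m hm
  have hCbsum : HasSum (fun i => C * b i) (C * (1 / (m : ℝ) ^ 2)) := hbsum.mul_left C
  have hfsum : Summable f :=
    Summable.of_nonneg_of_le (fun i => (hfpos i).le) hble hCbsum.summable
  have htsum_le : ∑' i, f i ≤ C * (1 / (m : ℝ) ^ 2) := by
    calc ∑' i, f i ≤ ∑' i, C * b i := Summable.tsum_le_tsum hble hfsum hCbsum.summable
    _ = C * (1 / (m : ℝ) ^ 2) := hCbsum.tsum_eq
  have hq : qConst m = m * ∑' i, f i := rfl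
  constructor
  · rw [hq]
    exact mul_pos hm0 (Summable.tsum_pos hfsum (fun i => (hfpos i).le) 0 (hfpos 0))
  · have hsqrt : Real.sqrt 2 ≤ Real.sqrt m := Real.sqrt_le_sqrt hm2
    have h56 : (5:ℝ)/6 < Real.sqrt 2 := by
      rw [show (5:ℝ)/6 = Real.sqrt ((5/6)^2) by rw [Real.sqrt_sq (by norm_num)]]
      exact Real.sqrt_lt_sqrt (by positivity) (by norm_num)
    have hC56 : C ≤ 5/6 := by
      rw [hC]
      have : 1 / ((m:ℝ) + 1) ≤ 1/3 := by
        apply one_div_le_one_div_of_le <;> linarith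
      linarith
    have hsm : Real.sqrt m * Real.sqrt m = m := Real.mul_self_sqrt hm0.le
    have hsp : (0:ℝ) < Real.sqrt m := Real.sqrt_pos.2 hm0
    have h1 : qConst m ≤ C / m := by
      rw [hq]
      calc (m:ℝ) * ∑' i, f i ≤ m * (C * (1 / (m : ℝ) ^ 2)) := by
            exact mul_le_mul_of_nonneg_left htsum_le hm0.le
      _ = C / m := by field_simp
    have h2 : C / m < theta m := by
      rw [theta, div_lt_div_iff₀ hm0 hsp]
      have h3 : C * Real.sqrt m < (m:ℝ) := by
        calc C * Real.sqrt m ≤ 5/6 * Real.sqrt m := mul_le_mul_of_nonneg_right hC56 hsp.le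
        _ < Real.sqrt 2 * Real.sqrt m := mul_lt_mul_of_pos_right h56 hsp
        _ ≤ Real.sqrt m * Real.sqrt m := mul_le_mul_of_nonneg_right hsqrt hsp.le
        _ = m := hsm
      linarith
    linarith
end
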